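/- Let C be a counter machine and ℂ the Σ_C-Nmatrix induced by C. For all a, b ∈ ℕ_0, if a ≠ b+1 then there exists a valuation v ∈ Val(ℂ) such that v(enc(a)) ∉ succ_ℂ(v(enc(b))). -/

import Mathlib

structure Signature where
  Conn : Type
  arity : Conn → ℕ

inductive Fm (S : Signature) : Type where
  | var : ℕ → Fm S
  | app : (c : S.Conn) → (Fin (S.arity c) → Fm S) → Fm S

def Fm.subst {S : Signature} (σ : ℕ → Fm S) : Fm S → Fm S
  | .var i => σ i
  | .app c args => .app c (fun j => (args j).subst σ)

def Fm.varsLT {S : Signature} (n : ℕ) : Fm S → Prop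
  | .var i => i < n
  | .app _ args => ∀ j, (args j).varsLT n

structure NMatrix (S : Signature) (V : Type) where
  D : Set V
  interp : (c : S.Conn) → (Fin (S.arity c) → V) → Set V
  interp_nonempty : ∀ c args, (interp c args).Nonempty

def IsVal {S : Signature} {V : Type} (M : NMatrix S V) (v : Fm S → V) : Prop :=
  ∀ (c : S.Conn) (args : Fin (S.arity c) → Fm S),
    v (Fm.app c args) ∈ M.interp c (fun i => v (args i))

def Entails {S : Signature} {V : Type} (M : NMatrix S V) (Γ : Set (Fm S)) (A : Fm S) : Prop :=
  ∀ v, IsVal M v → (∀ B ∈ Γ, v B ∈ M.D) → v A ∈ M.D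

def Interderiv {S : Signature} {V : Type} (M : NMatrix S V) (A B : Fm S) : Prop :=
  Entails M {A} B ∧ Entails M {B} A

def Deterministic {S : Signature} {V : Type} (M : NMatrix S V) : Prop :=
  ∀ c args, ∃ x, M.interp c args = {x}

inductive CMNum : Type where
  | r0 | ge0 | ge1 | ge2
deriving DecidableEq

inductive CMInstr (n : ℕ) (Q : Type) : Type where
  | inc : Fin n → Q → CMInstr n Q
  | dec : Fin n → Q → Q → CMInstr n Q

structure CounterMachine where
  n : ℕ
  Q : Type
  finQ : Finite Q
  qinit : Q
  δ : Q → Option (CMInstr n Q)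

inductive CMVal (C : CounterMachine) : Type where
  | num : CMNum → CMVal C
  | conf : C.Q → (Fin C.n → CMNum) → CMVal C
  | init : CMVal C
  | error : CMVal C

inductive CMConn (C : CounterMachine) : Type where
  | zero : CMConn C
  | eps : CMConn C
  | succ : CMConn C
  | step : C.Q → CMConn C

def CMSig (C : CounterMachine) : Signature where
  Conn := CMConn C
  arity := fun c => match c with
    | .zero => 0
    | .eps => 0
    | .succ => 1
    | .step _ => C.n + 1

/-- Interpretation of `succ` on abstract numbers. -/
def zeroNum : Set CMNum := {.r0, .ge0}

def succNum : CMNum → Set CMNum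
  | .r0 => {.ge1}
  | .ge0 => {.ge0, .ge1}
  | .ge1 => {.ge2}
  | .ge2 => {.ge2}

/-- Interpretation of `succ` in the Nmatrix induced by `C`. -/
def succC (C : CounterMachine) : CMVal C → Set (CMVal C)
  | .num x => CMVal.num '' succNum x
  | _ => {.error}

/-- Interpretation of `zero` in the Nmatrix induced by `C`. -/
def zeroC (C : CounterMachine) : Set (CMVal C) := {.num .r0, .num .ge0}

/-- The condition under which `step^q` applied to `x` and a tuple of numbers `zn`
produces the configuration value `conf q zn`. -/
def stepOK (C : CounterMachine) (q : C.Q) (x : CMVal C) (zn : Fin C.n → CMNum) : Prop :=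
  (x = CMVal.init ∧ q = C.qinit ∧ ((∀ i, zn i = .r0) ∨ (∀ i, zn i = .ge0))) ∨
  (∃ (q' : C.Q) (yn : Fin C.n → CMNum), x = CMVal.conf q' yn ∧
    ((∃ i, C.δ q' = some (.inc i q) ∧ zn i ∈ succNum (yn i) ∧ ∀ l, l ≠ i → zn l = yn l) ∨
     (∃ i s, C.δ q' = some (.dec i q s) ∧ yn i ∈ succNum (zn i) ∧ ∀ l, l ≠ i → zn l = yn l) ∨
     (∃ i s, C.δ q' = some (.dec i s q) ∧ yn i ∈ zeroNum ∧ zn = yn)))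

/-- Interpretation of `step^q` in the Nmatrix induced by `C`. -/
def stepC (C : CounterMachine) (q : C.Q) (x : CMVal C) (z : Fin C.n → CMVal C) :
    Set (CMVal C) :=
  { w | (∃ zn : Fin C.n → CMNum, (∀ i, z i = .num (zn i)) ∧ stepOK C q x zn ∧
          w = .conf q zn) ∨
        (¬ (∃ zn : Fin C.n → CMNum, (∀ i, z i = .num (zn i)) ∧ stepOK C q x zn) ∧
          w = .error) }

lemma succC_nonempty (C : CounterMachine) (x : CMVal C) : (succC C x).Nonempty := by
  cases x with
  | num y =>
      cases y
      · exact ⟨.num .ge1, by simp [succC, succNum]⟩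
      · exact ⟨.num .ge0, by simp [succC, succNum]⟩
      · exact ⟨.num .ge2, by simp [succC, succNum]⟩
      · exact ⟨.num .ge2, by simp [succC, succNum]⟩
  | conf q r => exact ⟨.error, rfl⟩
  | init => exact ⟨.error, rfl⟩
  | error => exact ⟨.error, rfl⟩

lemma stepC_nonempty (C : CounterMachine) (q : C.Q) (x : CMVal C)
    (z : Fin C.n → CMVal C) : (stepC C q x z).Nonempty := by
  by_cases h : ∃ zn : Fin C.n → CMNum, (∀ i, z i = .num (zn i)) ∧ stepOK C q x zn
  · obtain ⟨zn, hz, hok⟩ := h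
    exact ⟨.conf q zn, Or.inl ⟨zn, hz, hok, rfl⟩⟩
  · exact ⟨.error, Or.inr ⟨h, rfl⟩⟩

/-- The Nmatrix ℂ induced by the counter machine `C`. -/
def CMmatrix (C : CounterMachine) : NMatrix (CMSig C) (CMVal C) where
  D := { w | ∃ (q : C.Q) (r : Fin C.n → CMNum), w = CMVal.conf q r ∧ C.δ q = none }
  interp := fun c => match c with
    | .zero => fun _ => zeroC C
    | .eps => fun _ => {CMVal.init}
    | .succ => fun args => succC C (args ⟨0, Nat.one_pos⟩)
    | .step q => fun args => stepC C q (args ⟨0, Nat.succ_pos _⟩) (fun i => args i.succ)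
  interp_nonempty := by
    intro c args
    cases c with
    | zero => exact ⟨.num .r0, Or.inl rfl⟩
    | eps => exact ⟨.init, rfl⟩
    | succ => exact succC_nonempty C _
    | step q => exact stepC_nonempty C q _ _

/-- Encoding of natural numbers as closed formulas. -/
def enc (C : CounterMachine) : ℕ → Fm (CMSig C)
  | 0 => .app .zero (fun i => i.elim0)
  | a + 1 => .app .succ (fun _ => enc C a)

attribute [local instance] Classical.propDecidable

/-- Numeric code of a formula: `some k` for the numeral `enc C k`, `none` otherwise. -/
def code {C : CounterMachine} : Fm (CMSig C) → Option ℕ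
  | .app .zero _ => some 0
  | .app .succ args => (code (args ⟨0, Nat.one_pos⟩)).map (· + 1)
  | _ => none

/-- A valuation determined by a function `f : ℕ → CMNum` on numerals. -/
noncomputable def myval (C : CounterMachine) (f : ℕ → CMNum) : Fm (CMSig C) → CMVal C
  | .var _ => .error
  | .app .zero _ => .num (f 0)
  | .app .eps _ => .init
  | .app .succ args =>
      match code (args ⟨0, Nat.one_pos⟩) with
      | some k => .num (f (k + 1))
      | none => .error
  | .app (.step q) args =>
      if h : ∃ zn : Fin C.n → CMNum,
          (∀ i, myval C f (args i.succ) = .num (zn i)) ∧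
          stepOK C q (myval C f (args ⟨0, Nat.succ_pos _⟩)) zn
      then .conf q h.choose
      else .error

lemma myval_code_some {C : CounterMachine} (f : ℕ → CMNum) {A : Fm (CMSig C)} {k : ℕ}
    (hk : code A = some k) : myval C f A = .num (f k) := by
  cases A with
  | var i => simp [code] at hk
  | app c args =>
      cases c with
      | zero =>
          simp [code] at hk
          subst hk; rfl
      | eps => simp [code] at hk
      | succ =>
          rw [code] at hk
          rcases Option.map_eq_some_iff.1 hk with ⟨j, hj, rfl⟩
          rw [myval, hj]
      | step q => simp [code] at hk

lemma myval_not_num {C : CounterMachine} (f : ℕ → CMNum) {A : Fm (CMSig C)}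
    (h : code A = none) : ∀ x, myval C f A ≠ .num x := by
  intro x
  cases A with
  | var i => simp [myval]
  | app c args =>
      cases c with
      | zero => simp [code] at h
      | eps => simp [myval]
      | succ =>
          rw [code] at h
          rw [Option.map_eq_none_iff] at h
          rw [myval, h]
          simp
      | step q =>
          rw [myval]
          split <;> simp

lemma code_enc (C : CounterMachine) (k : ℕ) : code (enc C k) = some k := by
  induction k with
  | zero => rfl
  | succ k ih => rw [enc, code, ih]; rfl

lemma myval_isVal (C : CounterMachine) (f : ℕ → CMNum)
    (hf0 : f 0 ∈ zeroNum) (hfs : ∀ k, f (k + 1) ∈ succNum (f k)) :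
    IsVal (CMmatrix C) (myval C f) := by
  intro c args
  cases c with
  | zero =>
      show myval C f _ ∈ zeroC C
      rw [myval]
      rcases hf0 with h | h <;> simp_all [zeroC, zeroNum]
  | eps =>
      show myval C f _ ∈ ({CMVal.init} : Set (CMVal C))
      rw [myval]; rfl
  | succ =>
      show myval C f _ ∈ succC C (myval C f (args ⟨0, Nat.one_pos⟩))
      rw [myval]
      rcases hc : code (args ⟨0, Nat.one_pos⟩) with _ | k
      · -- none
        have hnn := myval_not_num f hc
        cases hv : myval C f (args ⟨0, Nat.one_pos⟩) with
        | num x => exact absurd hv (hnn x)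
        | conf q r => exact rfl
        | init => exact rfl
        | error => exact rfl
      · rw [myval_code_some f hc]
        exact ⟨f (k + 1), hfs k, rfl⟩
  | step q =>
      show myval C f _ ∈ stepC C q (myval C f (args ⟨0, Nat.succ_pos _⟩))
        (fun i => myval C f (args i.succ))
      rw [myval]
      split
      next h =>
        exact Or.inl ⟨h.choose, h.choose_spec.1, h.choose_spec.2, rfl⟩
      next h =>
        exact Or.inr ⟨h, rfl⟩

/-- For the Nmatrix ℂ induced by a counter machine C, if a ≠ b + 1 then there is
a valuation v with v(enc(a)) ∉ succ_ℂ(v(enc(b))). -/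
theorem stmt_5 (C : CounterMachine) (a b : ℕ) (h : a ≠ b + 1) :
    ∃ v : Fm (CMSig C) → CMVal C, IsVal (CMmatrix C) v ∧
      v (enc C a) ∉ succC C (v (enc C b)) := by
  rcases a with _ | a'
  · -- a = 0 : use the exact valuation; r0 is never a successor.
    set f : ℕ → CMNum := fun k => match k with | 0 => .r0 | 1 => .ge1 | _ + 2 => .ge2 with hf
    have hf0 : f 0 ∈ zeroNum := by simp [hf, zeroNum]
    have hfs : ∀ k, f (k + 1) ∈ succNum (f k) := by
      intro k
      rcases k with _ | _ | k <;> simp [hf, succNum]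
    refine ⟨myval C f, myval_isVal C f hf0 hfs, ?_⟩
    rw [myval_code_some f (code_enc C 0), myval_code_some f (code_enc C b)]
    intro hmem
    rcases hmem with ⟨x, hx, hxe⟩
    have : x = f 0 := by injection hxe
    subst this
    cases hb : f b <;> rw [hb] at hx <;> simp [hf, succNum] at hx
  · -- a = a' + 1, a ≠ b + 1
    set t : ℕ := if a' + 1 ≤ b then a' else b with ht
    set f : ℕ → CMNum :=
      fun k => if k ≤ t then .ge0 else if k = t + 1 then .ge1 else .ge2 with hf
    have hf0 : f 0 ∈ zeroNum := by simp [hf, zeroNum]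
    have hfs : ∀ k, f (k + 1) ∈ succNum (f k) := by
      intro k
      simp only [hf]
      split_ifs <;> simp_all [succNum] <;> omega
    refine ⟨myval C f, myval_isVal C f hf0 hfs, ?_⟩
    rw [myval_code_some f (code_enc C (a' + 1)), myval_code_some f (code_enc C b)]
    intro hmem
    rcases hmem with ⟨x, hx, hxe⟩
    have hxfa : x = f (a' + 1) := by injection hxe
    subst hxfa
    by_cases hab : a' + 1 ≤ b
    · -- t = a', f (a'+1) = ge1, f b ∈ {ge1, ge2}
      have hta : t = a' := by simp [ht, hab]
      have hfa : f (a' + 1) = .ge1 := by simp [hf, hta]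
      have hfb : f b = .ge1 ∨ f b = .ge2 := by
        simp only [hf]
        split_ifs with h1 h2
        · omega
        · exact Or.inl rfl
        · exact Or.inr rfl
      rw [hfa] at hx
      rcases hfb with hb | hb <;> rw [hb] at hx <;> simp [succNum] at hx
    · -- a' + 1 ≥ b + 2, t = b, f b = ge0, f (a'+1) = ge2
      have htb : t = b := by simp [ht, hab]
      have hge : b + 2 ≤ a' + 1 := by omega
      have hfb : f b = .ge0 := by simp [hf, htb]
      have hfa : f (a' + 1) = .ge2 := by
        simp only [hf]
        split_ifs <;> first | rfl | omega
      rw [hfa] at hx; rw [hfb] at hx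
      simp [succNum] at hx
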